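/- For every θ > 0 and every x ≥ 0, the mean residual life function of the i-Garima distribution satisfies m(x) = (1/(1−G(x;θ))) · ∫ₓ^∞ (1−G(t;θ)) dt = (4+θ+θx)/(θ(3+θ+θx)), where G(x;θ) = 1 − (1 + θx/(θ+3))·e^{-θx}. -/

import Mathlib

open MeasureTheory Filter Real

theorem iGarima_mrlf (θ : ℝ) (hθ : 0 < θ) (x : ℝ) (hx : 0 ≤ x) :
    (1 / (1 - (1 - (1 + θ * x / (θ + 3)) * Real.exp (-θ * x))))
        * ∫ t in Set.Ioi x, (1 - (1 - (1 + θ * t / (θ + 3)) * Real.exp (-θ * t)))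
      = (4 + θ + θ * x) / (θ * (3 + θ + θ * x)) := by
  have h3 : (0:ℝ) < θ + 3 := by linarith
  set A : ℝ := (θ + 4) / (θ * (θ + 3)) with hA
  set B : ℝ := 1 / (θ + 3) with hB
  set g : ℝ → ℝ := fun t => -(A + B * t) * Real.exp (-θ * t) with hg
  have hderiv : ∀ t : ℝ, HasDerivAt g ((1 + θ * t / (θ + 3)) * Real.exp (-θ * t)) t := by
    intro t
    have h1 : HasDerivAt (fun t : ℝ => -(A + B * t)) (-B) t := by
      exact (((hasDerivAt_id t).const_mul B).const_add A).neg.congr_deriv (by simp)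
    have h2 : HasDerivAt (fun t : ℝ => Real.exp (-θ * t)) (Real.exp (-θ * t) * (-θ)) t := by
      simpa using ((hasDerivAt_id t).const_mul (-θ)).exp
    have := h1.mul h2
    refine this.congr_deriv ?_
    rw [hA, hB]
    field_simp
    ring
  have htend : Tendsto g atTop (nhds 0) := by
    have h1 : Tendsto (fun t : ℝ => Real.exp (-θ * t)) atTop (nhds 0) := by
      rw [Real.tendsto_exp_comp_nhds_zero]
      have h := (tendsto_id (α := ℝ)).const_mul_atTop hθ
      exact (tendsto_neg_atBot_iff.mpr h).congr (fun t => by simp)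
    have h2 : Tendsto (fun t : ℝ => t * Real.exp (-θ * t)) atTop (nhds 0) := by
      have hθt : Tendsto (fun t : ℝ => θ * t) atTop atTop :=
        tendsto_id.const_mul_atTop hθ
      have := (tendsto_pow_mul_exp_neg_atTop_nhds_zero 1).comp hθt
      have h' : Tendsto (fun t : ℝ => (1/θ) * ((θ * t) ^ 1 * Real.exp (-(θ * t)))) atTop (nhds 0) := by
        simpa using this.const_mul (1/θ)
      refine h'.congr' ?_
      filter_upwards with t
      field_simp
    have := ((h1.const_mul A).add (h2.const_mul B)).neg
    simp only [neg_zero, mul_zero, add_zero, zero_add] at this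
    refine this.congr' ?_
    · filter_upwards with t; simp [hg]; ring
  have hint : (∫ t in Set.Ioi x, (1 + θ * t / (θ + 3)) * Real.exp (-θ * t))
      = (A + B * x) * Real.exp (-θ * x) := by
    have := integral_Ioi_of_hasDerivAt_of_nonneg
      (g := g) (g' := fun t => (1 + θ * t / (θ + 3)) * Real.exp (-θ * t)) (a := x) (l := 0)
      (hderiv x).continuousAt.continuousWithinAt (fun t _ => hderiv t)
      (fun t ht => by
        have : (0:ℝ) < t := lt_of_le_of_lt hx ht
        positivity)
      htend
    rw [this, hg]; ring
  have hintegrand : ∀ t : ℝ,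
      (1 - (1 - (1 + θ * t / (θ + 3)) * Real.exp (-θ * t)))
        = (1 + θ * t / (θ + 3)) * Real.exp (-θ * t) := by intro t; ring
  simp only [hintegrand]
  rw [hint]
  have hexp : Real.exp (-θ * x) ≠ 0 := Real.exp_ne_zero _
  have hpos : (0:ℝ) < 1 + θ * x / (θ + 3) := by positivity
  have h3x : (0:ℝ) < 3 + θ + θ * x := by positivity
  rw [hA, hB]
  field_simp
  ring
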